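/- arXiv:1910.11796 — 2 statements merged into one kernel-verified Lean document; each statement's English description precedes it below -/
import Mathlib

section
/- Let γ : I → ℝ^d be an (H,α)-Hölder curve and define A_0 := ⋂_{η>0} {t ∈ I : γ is not (α,η)-tight at t}. Then H^{1/α}(γ(A_0)) = 0. -/
open MeasureTheory Set
open scoped ENNReal NNReal

noncomputable section

namespace FracPerc

/-- Euclidean space `ℝ^d`. -/
abbrev Euc (d : ℕ) := EuclideanSpace ℝ (Fin d)

/-- View a coordinate function as a point of `ℝ^d`. -/
def ptOf (d : ℕ) (f : Fin d → ℝ) : Euc d := WithLp.toLp 2 f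

/-- The set of vertices of the `N^d`-branching tree: finite words over `Fin (N^d)`. -/
abbrev Word (d N : ℕ) : Type := Σ n : ℕ, Fin n → Fin (N ^ d)

/-- The sample space `Ω` of fractal percolation. -/
abbrev Omega (d N : ℕ) : Type := Word d N → Bool

/-- The Bernoulli measure `(1-p)·δ_false + p·δ_true` on `Bool`. -/
def bernoulliMeasure (p : ℝ) : Measure Bool :=
  ENNReal.ofReal (1 - p) • Measure.dirac false + ENNReal.ofReal p • Measure.dirac true

/-- `P` is the percolation measure `ℙ_p = ((1-p)δ_0 + pδ_1)^{V}` on `Ω = {0,1}^V`: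
it is the unique probability measure under which the coordinates are independent and
Bernoulli(`p`)-distributed. -/
def IsPercMeasure (d N : ℕ) (p : ℝ) (P : Measure (Omega d N)) : Prop :=
  IsProbabilityMeasure P ∧
    ProbabilityTheory.iIndepFun
      (fun w : Word d N => fun ω : Omega d N => ω w) P ∧
    ∀ w : Word d N, P.map (fun ω : Omega d N => ω w) = bernoulliMeasure p

/-- The natural base-`N` coding bijection between words of length `n` and grid positions. -/
def coding (d N n : ℕ) : (Fin n → Fin (N ^ d)) ≃ (Fin d → Fin (N ^ n)) :=
  (Equiv.arrowCongr (Equiv.refl (Fin n)) finFunctionFinEquiv.symm).trans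
    ((Equiv.piComm fun (_ : Fin n) (_ : Fin d) => Fin N).trans
      (Equiv.arrowCongr (Equiv.refl (Fin d)) finFunctionFinEquiv))

/-- The grid cube of level `n` at position `l`, an element of `𝒬_n`. -/
def gridCube (d N n : ℕ) (l : Fin d → Fin (N ^ n)) : Set (Euc d) :=
  {x | ∀ i, (l i : ℝ) / (N : ℝ) ^ n ≤ x i ∧ x i ≤ ((l i : ℝ) + 1) / (N : ℝ) ^ n}

/-- The cube of level `n` at position `l` is chosen in the realisation `ω`. -/
def chosen (d N : ℕ) (ω : Omega d N) (n : ℕ) (l : Fin d → Fin (N ^ n)) : Prop :=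
  ω ⟨n, (coding d N n).symm l⟩ = true

/-- The fractal percolation set `E(ω)`. -/
def percSet (d N : ℕ) (ω : Omega d N) : Set (Euc d) :=
  ⋂ n : ℕ, ⋃ l : Fin d → Fin (N ^ n), ⋃ _ : chosen d N ω n l, gridCube d N n l

/-! ### Geometry -/

/-- The orthogonal projection onto the `i`-th coordinate axis. -/
def proj (d : ℕ) (i : Fin d) : Euc d → ℝ := fun x => x i

/-- The line through `x` with direction `v`. -/
def lineThrough (d : ℕ) (x v : Euc d) : Set (Euc d) := {y | ∃ t : ℝ, y = x + t • v}

/-- `ℓ` is a line in `ℝ^d`. -/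
def IsLine (d : ℕ) (ℓ : Set (Euc d)) : Prop := ∃ x v, v ≠ 0 ∧ ℓ = lineThrough d x v

/-- Two parallel lines. -/
def Parallel (d : ℕ) (ℓ ℓ' : Set (Euc d)) : Prop :=
  ∃ x x' v, v ≠ 0 ∧ ℓ = lineThrough d x v ∧ ℓ' = lineThrough d x' v

/-- `i` is a principle direction of the line `ℓ`: it maximises the length of the
projections of subsegments of `ℓ`. -/
def PrincipleDir (d : ℕ) (i : Fin d) (ℓ : Set (Euc d)) : Prop :=
  ∀ x ∈ ℓ, ∀ y ∈ ℓ, ∀ j : Fin d, |y j - x j| ≤ |y i - x i|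

/-- `ℓ` intersects the set `A` properly at level `n`, in direction `i`:
`H¹(Π_i(ℓ ∩ A)) ≥ d⁻¹ N⁻ⁿ`. -/
def ProperlyIn (d N : ℕ) (i : Fin d) (ℓ A : Set (Euc d)) (n : ℕ) : Prop :=
  ENNReal.ofReal ((d : ℝ)⁻¹ * ((N : ℝ) ^ n)⁻¹) ≤ μH[1] (proj d i '' (ℓ ∩ A))

/-- `ℓ` intersects the set `A` properly at level `n`. -/
def Properly (d N : ℕ) (ℓ A : Set (Euc d)) (n : ℕ) : Prop :=
  ∃ i, PrincipleDir d i ℓ ∧ ProperlyIn d N i ℓ A n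

/-- `ℓ` intersects `A` very properly in direction `i` at level `n`:
`Π_i(ℓ ∩ A)` contains an interval `[k d⁻¹N⁻ⁿ, (k+1) d⁻¹N⁻ⁿ]` with `k ∈ ℤ`. -/
def VeryProperly (d N : ℕ) (i : Fin d) (ℓ A : Set (Euc d)) (n : ℕ) : Prop :=
  ∃ k : ℤ, Icc ((k : ℝ) * ((d : ℝ)⁻¹ * ((N : ℝ) ^ n)⁻¹))
      (((k : ℝ) + 1) * ((d : ℝ)⁻¹ * ((N : ℝ) ^ n)⁻¹)) ⊆ proj d i '' (ℓ ∩ A)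

/-- The `(n,i)`-layer `Π_i⁻¹([k N⁻ⁿ, (k+1) N⁻ⁿ])`. -/
def nLayer (d N n : ℕ) (i : Fin d) (k : ℕ) : Set (Euc d) :=
  {x | x i ∈ Icc ((k : ℝ) / (N : ℝ) ^ n) (((k : ℝ) + 1) / (N : ℝ) ^ n)}

/-- The points `x` and `y` lie in different connected components of the complement of the
interior of `L`; this is what it means for a curve (or segment) with endpoints `x`, `y` to
pass through the layer `L`. -/
def PassesThroughPts (d : ℕ) (x y : Euc d) (L : Set (Euc d)) : Prop :=
  x ∈ (interior L)ᶜ ∧ y ∈ (interior L)ᶜ ∧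
    connectedComponentIn (interior L)ᶜ x ≠ connectedComponentIn (interior L)ᶜ y

/-- The segment `L(x,y)` passes through the layer `L`. -/
def SegPassesThrough (d : ℕ) (x y : Euc d) (L : Set (Euc d)) : Prop :=
  PassesThroughPts d x y L

/-- The level-`m` cubes at positions `l`, `l'` are `i`-neighbours: they intersect and lie in
a common `(m,i)`-layer. -/
def INeighbour (d N m : ℕ) (i : Fin d) (l l' : Fin d → Fin (N ^ m)) : Prop :=
  (gridCube d N m l ∩ gridCube d N m l').Nonempty ∧
    ∃ k : ℕ, gridCube d N m l ⊆ nLayer d N m i k ∧ gridCube d N m l' ⊆ nLayer d N m i k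

/-- The level-`m` cube at position `l` is strongly `i`-deleted: no `i`-neighbour of it
(including itself) is chosen. -/
def StronglyIDeleted (d N : ℕ) (ω : Omega d N) (m : ℕ) (i : Fin d)
    (l : Fin d → Fin (N ^ m)) : Prop :=
  ∀ l', INeighbour d N m i l l' → ¬ chosen d N ω m l'

/-- Indices of `(m,i)`-layers meeting `A` in a set of positive length. -/
def posLayers (d N m : ℕ) (i : Fin d) (A : Set (Euc d)) : Set ℕ :=
  {k | 0 < μH[1] (A ∩ nLayer d N m i k)}

/-- `k'` indexes one of the first two or last two `(m,i)`-layers (in the natural order)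
meeting `A` in positive length. -/
def EdgeLayer (d N m : ℕ) (i : Fin d) (A : Set (Euc d)) (k' : ℕ) : Prop :=
  k' ∈ posLayers d N m i A ∧
    (({k ∈ posLayers d N m i A | k < k'}).ncard ≤ 1 ∨
      ({k ∈ posLayers d N m i A | k' < k}).ncard ≤ 1)

/-- The region `A` (a cube of level `n`) is `m₀`-good for the line `ℓ` with principle
direction `i`: there is a strongly `i`-deleted level-`(n+m₀)` cube inside `A`, not contained
in the first two or last two `(n+m₀,i)`-layers meeting `ℓ ∩ A` in positive length,
which `ℓ` intersects properly. -/
def M0GoodForDir (d N : ℕ) (ω : Omega d N) (n m0 : ℕ) (i : Fin d) (ℓ A : Set (Euc d)) : Prop :=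
  ∃ l' : Fin d → Fin (N ^ (n + m0)),
    gridCube d N (n + m0) l' ⊆ A ∧
    StronglyIDeleted d N ω (n + m0) i l' ∧
    (∀ k', EdgeLayer d N (n + m0) i (ℓ ∩ A) k' →
      ¬ gridCube d N (n + m0) l' ⊆ nLayer d N (n + m0) i k') ∧
    Properly d N ℓ (gridCube d N (n + m0) l') (n + m0)

/-- The family `Γ(Q,m₀)` of lines through a vertex `v` of the cube `Q` (with corner `corner`
and side length `side`) and a grid point of spacing `side/N^{m₀}` of a `(d-1)`-face `F` of `Q`
not containing `v`. -/
def cubeGamma (d N : ℕ) (corner : Fin d → ℝ) (side : ℝ) (m0 : ℕ) : Set (Set (Euc d)) :=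
  {ℓ | ∃ (i : Fin d) (ε : Bool) (vs : Fin d → Bool) (g : Fin d → ℝ),
    vs i = !ε ∧
    g i = corner i + (if ε then side else 0) ∧
    (∀ j, j ≠ i → ∃ z : ℕ, z ≤ N ^ m0 ∧ g j = corner j + (z : ℝ) * side / (N : ℝ) ^ m0) ∧
    ℓ = lineThrough d (ptOf d fun j => corner j + (if vs j then side else 0))
      (ptOf d g - ptOf d fun j => corner j + (if vs j then side else 0))}

/-- The region `A` (a possibly shrunk/shifted cube of level `n` with corner `corner`) is
`m₀`-good: it is `m₀`-good for every line which intersects `A` properly and is parallel to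
some line of `Γ(Q,m₀)`. -/
def M0GoodA (d N : ℕ) (ω : Omega d N) (n m0 : ℕ) (corner : Fin d → ℝ) (A : Set (Euc d)) :
    Prop :=
  ∀ (ℓ : Set (Euc d)) (i : Fin d), IsLine d ℓ →
    (∃ ℓ' ∈ cubeGamma d N corner (((N : ℝ) ^ n)⁻¹) m0, Parallel d ℓ ℓ') →
    PrincipleDir d i ℓ → ProperlyIn d N i ℓ A n →
    M0GoodForDir d N ω n m0 i ℓ A

/-- The level-`n` cube at position `l` is `m₀`-good. -/
def M0Good (d N : ℕ) (ω : Omega d N) (n m0 : ℕ) (l : Fin d → Fin (N ^ n)) : Prop :=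
  M0GoodA d N ω n m0 (fun j => (l j : ℝ) / (N : ℝ) ^ n) (gridCube d N n l)

/-- The cube `K_Q`: concentric with `Q`, five times the side length. -/
def KCube (d N n : ℕ) (l : Fin d → Fin (N ^ n)) : Set (Euc d) :=
  {x | ∀ i, ((l i : ℝ) - 2) / (N : ℝ) ^ n ≤ x i ∧ x i ≤ ((l i : ℝ) + 3) / (N : ℝ) ^ n}

/-! ### Shifted grids -/

/-- The set `S = {-1,1}^d ∪ {0}` of shift directions. -/
def Shifts (d : ℕ) : Set (Fin d → ℤ) := {s | ∀ i, s i = 1 ∨ s i = -1} ∪ {0}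

/-- The translation vector `Σ_i s_i N^{-(n+n'+m₀)} e_i`. -/
def shiftVec (d N n nn m0 : ℕ) (s : Fin d → ℤ) : Fin d → ℝ :=
  fun i => (s i : ℝ) * ((N : ℝ) ^ (n + nn + m0))⁻¹

/-- A level-`n` grid cube translated by the vector `t`: an element of a shifted grid. -/
def shiftCube (d N n : ℕ) (t : Fin d → ℝ) (l : Fin d → Fin (N ^ n)) : Set (Euc d) :=
  {x | ∀ i, (l i : ℝ) / (N : ℝ) ^ n + t i ≤ x i ∧ x i ≤ ((l i : ℝ) + 1) / (N : ℝ) ^ n + t i}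

/-- The concentric cube `int_{m₀} Q = (1 - 2N^{-m₀})Q` of a (shifted) level-`n` cube. -/
def intCube (d N n m0 : ℕ) (t : Fin d → ℝ) (l : Fin d → Fin (N ^ n)) : Set (Euc d) :=
  {x | ∀ i, (l i : ℝ) / (N : ℝ) ^ n + t i + ((N : ℝ) ^ (n + m0))⁻¹ ≤ x i ∧
    x i ≤ ((l i : ℝ) + 1) / (N : ℝ) ^ n + t i - ((N : ℝ) ^ (n + m0))⁻¹}

/-- The (shifted) level-`n` cube at position `l`, translated by `t`, is independently
`m₀`-good. -/
def IndepM0Good (d N : ℕ) (ω : Omega d N) (n m0 : ℕ) (t : Fin d → ℝ)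
    (l : Fin d → Fin (N ^ n)) : Prop :=
  M0GoodA d N ω n m0 (fun j => (l j : ℝ) / (N : ℝ) ^ n + t j) (intCube d N n m0 t l)

/-! ### Iterated goodness along a sequence of levels -/

/-- `GoodL d N ω c m0 k L n l` says that the level-`n` cube at position `l` is
`(k, L, c, m₀)`-good, for a strictly decreasing sequence `L` of levels with `L k = 0`. -/
def GoodL (d N : ℕ) (ω : Omega d N) (c m0 : ℕ) :
    (k : ℕ) → (L : ℕ → ℕ) → (n : ℕ) → (Fin d → Fin (N ^ n)) → Prop
  | 0, _, n, l => M0Good d N ω n m0 l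
  | k + 1, L, n, l =>
      ({l' : Fin d → Fin (N ^ (n + L k)) |
        gridCube d N (n + L k) l' ⊆ gridCube d N n l ∧
          ¬ GoodL d N ω c m0 k (fun j => L j - L k) (n + L k) l'}).ncard ≤ c

/-- Independently `(k, L, c, m₀)`-good cubes of the shifted grids (the shift vector `t`
is the common absolute translation of the nested shifted grids). -/
def IndepGoodL (d N : ℕ) (ω : Omega d N) (c m0 : ℕ) :
    (k : ℕ) → (L : ℕ → ℕ) → (n : ℕ) → (t : Fin d → ℝ) → (Fin d → Fin (N ^ n)) → Prop
  | 0, _, n, t, l => IndepM0Good d N ω n m0 t l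
  | k + 1, L, n, t, l =>
      ({l' : Fin d → Fin (N ^ (n + L k)) |
        shiftCube d N (n + L k) t l' ⊆ shiftCube d N n t l ∧
          ¬ IndepGoodL d N ω c m0 k (fun j => L j - L k) (n + L k) t l'}).ncard ≤ c

/-! ### Curves, Hölder conditions, tightness, gaps -/

/-- The maximum metric `d_∞` on `ℝ^d`. -/
def dmax (d : ℕ) (x y : Euc d) : ℝ := ⨆ i, |x i - y i|

/-- The `d_∞`-distance from a point to a set. -/
def dmaxSet (d : ℕ) (x : Euc d) (A : Set (Euc d)) : ℝ := sInf (dmax d x '' A)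

/-- `γ` (as a curve on `I`) is `(α,η,R)`-tight at `t`. -/
def TightAt (d : ℕ) (γ : ℝ → Euc d) (I : Set ℝ) (α η R t : ℝ) : Prop :=
  ∀ r : ℝ, 0 < r → r ≤ R → η * (2 * r) ^ α ≤ Metric.diam (γ '' (Icc (t - r) (t + r) ∩ I))

/-- `γ` has an `ε`-gap of scale `r` at `t` (with respect to `ω`). -/
def GapAtScale (d N : ℕ) (ω : Omega d N) (γ : ℝ → Euc d) (I : Set ℝ) (ε t r : ℝ) : Prop :=
  ∃ ta tb : ℝ, ta ∈ Icc (t - r) (t + r) ∩ I ∧ tb ∈ Icc (t - r) (t + r) ∩ I ∧ ta < tb ∧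
    (∀ u ∈ Ioo ta tb, γ u ∉ percSet d N ω) ∧
    ε * Metric.diam (γ '' (Icc (t - r) (t + r) ∩ I)) ≤ dist (γ ta) (γ tb)

end FracPerc

open FracPerc Filter Topology

/-- The image of the set of points where an `(H,α)`-Hölder curve is
tight for no `η > 0` is `H^{1/α}`-null. -/
theorem image_of_nontight_points_null
    (d : ℕ) (α H : ℝ) (hα0 : 0 < α) (hα1 : α ≤ 1) (hH : 0 ≤ H)
    (a b : ℝ) (hab : a ≤ b) (γ : ℝ → Euc d)
    (hHol : ∀ t ∈ Icc a b, ∀ s ∈ Icc a b, dist (γ t) (γ s) ≤ H * |t - s| ^ α) :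
    μH[1/α] (γ '' {t ∈ Icc a b | ∀ η : ℝ, 0 < η →
      ¬ ∃ R : ℝ, 0 < R ∧ TightAt d γ (Icc a b) α η R t}) = 0 := by
  classical
  set A : Set ℝ := {t ∈ Icc a b | ∀ η : ℝ, 0 < η →
      ¬ ∃ R : ℝ, 0 < R ∧ TightAt d γ (Icc a b) α η R t} with hA
  have hAI : A ⊆ Icc a b := fun t ht => ht.1
  have hinv : (0:ℝ) ≤ 1/α := by positivity
  -- boundedness of images of subsets of [a,b]
  have hbd : ∀ S : Set ℝ, S ⊆ Icc a b → Bornology.IsBounded (γ '' S) := by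
    intro S hS
    rw [Metric.isBounded_iff]
    refine ⟨H * (b - a) ^ α, ?_⟩
    rintro x ⟨u, hu, rfl⟩ y ⟨v, hv, rfl⟩
    calc dist (γ u) (γ v) ≤ H * |u - v| ^ α := hHol u (hS hu) v (hS hv)
      _ ≤ H * (b - a) ^ α := by
          apply mul_le_mul_of_nonneg_left _ hH
          apply Real.rpow_le_rpow (abs_nonneg _) _ hα0.le
          rw [abs_sub_le_iff]
          exact ⟨by linarith [(hS hu).1, (hS hu).2, (hS hv).1, (hS hv).2],
            by linarith [(hS hu).1, (hS hu).2, (hS hv).1, (hS hv).2]⟩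
  -- the sequence of thresholds
  set e : ℕ → ℝ := fun n => ((n:ℝ)+1)⁻¹ with he
  have hepos : ∀ n, 0 < e n := fun n => by positivity
  -- admissible radii
  set f : ℕ → ℝ → Set ℝ := fun n x =>
    {r | 0 < r ∧ Metric.diam (γ '' (Metric.closedBall x r ∩ Icc a b)) < e n * (2*r)^α}
    with hfdef
  have hf : ∀ n, ∀ x ∈ A, ∀ δ : ℝ, δ > 0 → (f n x ∩ Ioo 0 δ).Nonempty := by
    intro n x hx δ hδ
    have h1 := hx.2 (e n) (hepos n)
    push_neg at h1
    have h2 := h1 (δ/2) (by linarith)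
    rw [TightAt] at h2
    push_neg at h2
    obtain ⟨r, hr0, hrδ, hlt⟩ := h2
    refine ⟨r, ⟨hr0, ?_⟩, hr0, by linarith⟩
    rw [Real.closedBall_eq_Icc]
    exact hlt
  choose T rad Tcount TsubA hrad hnull hdisj using fun n =>
    Besicovitch.exists_disjoint_closedBall_covering_ae volume (f n) A (hf n)
      (fun _ => 1) (fun _ _ => one_pos)
  haveI : ∀ n, Countable (T n) := fun n => (Tcount n).to_subtype
  -- the common Lebesgue-null exceptional set
  set Z : Set ℝ := ⋃ n, (A \ ⋃ x ∈ T n, Metric.closedBall x (rad n x)) with hZ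
  have hZnull : volume Z = 0 := measure_iUnion_null hnull
  -- diameter bound for each ball image
  have hdiam' : ∀ n, ∀ i : T n,
      EMetric.diam (γ '' (Metric.closedBall (i:ℝ) (rad n i) ∩ Icc a b)) ≤
        ENNReal.ofReal (e n * (2 * rad n i) ^ α) := by
    intro n i
    obtain ⟨⟨hr0, hdi⟩, hr01⟩ := hrad n i i.2
    apply Metric.ediam_le_of_forall_dist_le
    intro x hx y hy
    have hb : Bornology.IsBounded (γ '' (Metric.closedBall (i:ℝ) (rad n i) ∩ Icc a b)) :=
      hbd _ inter_subset_right
    exact (Metric.dist_le_diam_of_mem hb hx hy).trans hdi.le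
  -- the Hölder part : null sets go to null sets
  have part2 : μH[1/α] (γ '' (A ∩ Z)) = 0 := by
    have hHolder : HolderOnWith H.toNNReal α.toNNReal γ (A ∩ Z) := by
      intro x hx y hy
      have h1 : dist (γ x) (γ y) ≤ H * |x - y| ^ α :=
        hHol x (hAI hx.1) y (hAI hy.1)
      rw [edist_dist, edist_dist, Real.dist_eq]
      calc ENNReal.ofReal (dist (γ x) (γ y)) ≤ ENNReal.ofReal (H * |x - y| ^ α) :=
            ENNReal.ofReal_le_ofReal h1
        _ = ENNReal.ofReal H * ENNReal.ofReal (|x - y| ^ α) := by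
            rw [ENNReal.ofReal_mul hH]
        _ = (H.toNNReal : ℝ≥0∞) * ENNReal.ofReal |x - y| ^ (α.toNNReal : ℝ) := by
            rw [← ENNReal.ofReal_rpow_of_nonneg (abs_nonneg _) hα0.le,
              Real.coe_toNNReal _ hα0.le]
            rfl
    have h := hHolder.hausdorffMeasure_image_le (Real.toNNReal_pos.2 hα0) hinv
    have hexp : (α.toNNReal : ℝ) * (1/α) = 1 := by
      rw [Real.coe_toNNReal _ hα0.le]
      field_simp
    rw [hexp, hausdorffMeasure_real] at h
    have hz : volume (A ∩ Z) = 0 := measure_mono_null inter_subset_right hZnull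
    rw [hz, mul_zero] at h
    exact le_antisymm h zero_le
  -- the covering part
  have part1 : μH[1/α] (γ '' (A \ Z)) = 0 := by
    have key := MeasureTheory.Measure.hausdorffMeasure_le_liminf_tsum (1/α) (γ '' (A \ Z))
        (l := atTop) (fun n => ENNReal.ofReal (e n * 2 ^ α)) ?_
        (fun n (i : T n) => γ '' (Metric.closedBall (i:ℝ) (rad n i) ∩ Icc a b)) ?_ ?_
    rotate_left
    · -- radii tend to zero
      have h1 : Filter.Tendsto e atTop (𝓝 0) := by
        have := tendsto_one_div_add_atTop_nhds_zero_nat (𝕜 := ℝ)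
        simpa [he, one_div] using this
      have h2 : Filter.Tendsto (fun n => e n * 2 ^ α) atTop (𝓝 0) := by
        simpa using h1.mul_const ((2:ℝ) ^ α)
      simpa using ENNReal.tendsto_ofReal h2
    · -- diameters are small
      apply Filter.Eventually.of_forall
      intro n i
      refine (hdiam' n i).trans (ENNReal.ofReal_le_ofReal ?_)
      obtain ⟨⟨hr0, _⟩, hr01⟩ := hrad n i i.2
      have h2r : (2 * rad n i) ^ α ≤ 2 ^ α :=
        Real.rpow_le_rpow (by linarith) (by linarith [hr01.2]) hα0.le
      exact mul_le_mul_of_nonneg_left h2r (hepos n).le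
    · -- covering
      apply Filter.Eventually.of_forall
      intro n y hy
      obtain ⟨u, ⟨huA, huZ⟩, rfl⟩ := hy
      have hu : u ∈ ⋃ x ∈ T n, Metric.closedBall x (rad n x) := by
        by_contra h
        exact huZ (mem_iUnion.2 ⟨n, huA, h⟩)
      obtain ⟨x, hxT, hxball⟩ := by simpa using hu
      exact mem_iUnion.2 ⟨⟨x, hxT⟩, ⟨u, ⟨hxball, hAI huA⟩, rfl⟩⟩
    -- estimate the sums
    have hsum : ∀ n, (∑' i : T n,
        EMetric.diam (γ '' (Metric.closedBall (i:ℝ) (rad n i) ∩ Icc a b)) ^ (1/α)) ≤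
        ENNReal.ofReal (e n ^ (1/α)) * ENNReal.ofReal (b - a + 2) := by
      intro n
      have hterm : ∀ i : T n,
          EMetric.diam (γ '' (Metric.closedBall (i:ℝ) (rad n i) ∩ Icc a b)) ^ (1/α) ≤
            ENNReal.ofReal (e n ^ (1/α)) * volume (Metric.closedBall (i:ℝ) (rad n i)) := by
        intro i
        obtain ⟨⟨hr0, _⟩, hr01⟩ := hrad n i i.2
        have h2r0 : (0:ℝ) < 2 * rad n i := by linarith
        have hbase : (0:ℝ) < e n * (2 * rad n i) ^ α :=
          mul_pos (hepos n) (Real.rpow_pos_of_pos h2r0 α)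
        calc EMetric.diam (γ '' (Metric.closedBall (i:ℝ) (rad n i) ∩ Icc a b)) ^ (1/α)
            ≤ ENNReal.ofReal (e n * (2 * rad n i) ^ α) ^ (1/α) :=
              ENNReal.rpow_le_rpow (hdiam' n i) hinv
          _ = ENNReal.ofReal ((e n * (2 * rad n i) ^ α) ^ (1/α)) :=
              ENNReal.ofReal_rpow_of_pos hbase
          _ = ENNReal.ofReal (e n ^ (1/α) * (2 * rad n i)) := by
              rw [Real.mul_rpow (hepos n).le (Real.rpow_pos_of_pos h2r0 α).le,
                ← Real.rpow_mul h2r0.le, mul_one_div_cancel hα0.ne', Real.rpow_one]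
          _ = ENNReal.ofReal (e n ^ (1/α)) * ENNReal.ofReal (2 * rad n i) := by
              rw [ENNReal.ofReal_mul (Real.rpow_nonneg (hepos n).le _)]
          _ = ENNReal.ofReal (e n ^ (1/α)) * volume (Metric.closedBall (i:ℝ) (rad n i)) := by
              rw [Real.volume_closedBall]
      calc (∑' i : T n,
          EMetric.diam (γ '' (Metric.closedBall (i:ℝ) (rad n i) ∩ Icc a b)) ^ (1/α))
          ≤ ∑' i : T n, ENNReal.ofReal (e n ^ (1/α)) *
              volume (Metric.closedBall (i:ℝ) (rad n i)) := ENNReal.tsum_le_tsum hterm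
        _ = ENNReal.ofReal (e n ^ (1/α)) *
              ∑' i : T n, volume (Metric.closedBall (i:ℝ) (rad n i)) := ENNReal.tsum_mul_left
        _ = ENNReal.ofReal (e n ^ (1/α)) *
              volume (⋃ x ∈ T n, Metric.closedBall x (rad n x)) := by
            rw [measure_biUnion (Tcount n) (hdisj n)
              (fun x _ => measurableSet_closedBall)]
        _ ≤ ENNReal.ofReal (e n ^ (1/α)) * ENNReal.ofReal (b - a + 2) := by
            apply mul_le_mul_right _ _
            have hsub : (⋃ x ∈ T n, Metric.closedBall x (rad n x)) ⊆ Icc (a-1) (b+1) := by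
              intro y hy
              obtain ⟨x, hxT, hxball⟩ := by simpa using hy
              obtain ⟨⟨hr0, _⟩, hr01⟩ := hrad n x hxT
              have hx1 := (TsubA n hxT).1
              have hx2 := (TsubA n hxT).2
              have : |y - x| ≤ rad n x := by
                rwa [Real.dist_eq] at hxball
              rw [abs_sub_le_iff] at this
              exact ⟨by linarith [this.1, this.2, hx1.1, hx1.2, hr01.2], by linarith [this.1, this.2, hx1.1, hx1.2, hr01.2]⟩
            calc volume (⋃ x ∈ T n, Metric.closedBall x (rad n x))
                ≤ volume (Icc (a-1) (b+1)) := measure_mono hsub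
              _ = ENNReal.ofReal (b - a + 2) := by
                  rw [Real.volume_Icc]
                  norm_num
                  ring_nf
    -- the bound tends to zero
    have hlim : Filter.Tendsto
        (fun n => ENNReal.ofReal (e n ^ (1/α)) * ENNReal.ofReal (b - a + 2)) atTop (𝓝 0) := by
      have h0 : Filter.Tendsto e atTop (𝓝 0) := by
        have := tendsto_one_div_add_atTop_nhds_zero_nat (𝕜 := ℝ)
        simpa [he, one_div] using this
      have h1 : Filter.Tendsto (fun n => e n ^ (1/α)) atTop (𝓝 0) := by
        have := h0.rpow_const (p := 1/α) (Or.inr hinv)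
        rwa [Real.zero_rpow (by positivity : (1:ℝ)/α ≠ 0)] at this
      have h2 : Filter.Tendsto (fun n => ENNReal.ofReal (e n ^ (1/α))) atTop (𝓝 0) := by
        simpa using ENNReal.tendsto_ofReal h1
      simpa using ENNReal.Tendsto.mul_const h2 (Or.inr ENNReal.ofReal_ne_top)
    have hliminf : Filter.liminf (fun n => ∑' i : T n,
        EMetric.diam (γ '' (Metric.closedBall (i:ℝ) (rad n i) ∩ Icc a b)) ^ (1/α)) atTop ≤ 0 := by
      have hle := Filter.liminf_le_liminf (Filter.Eventually.of_forall hsum)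
        (f := atTop)
      rw [hlim.liminf_eq] at hle
      exact hle
    exact le_antisymm (key.trans hliminf) zero_le
  -- put the two parts together
  refine le_antisymm ?_ zero_le
  have hsplit : γ '' A ⊆ γ '' (A \ Z) ∪ γ '' (A ∩ Z) := by
    rintro y ⟨u, hu, rfl⟩
    by_cases h : u ∈ Z
    · exact Or.inr ⟨u, ⟨hu, h⟩, rfl⟩
    · exact Or.inl ⟨u, ⟨hu, h⟩, rfl⟩
  calc μH[1/α] (γ '' A) ≤ μH[1/α] (γ '' (A \ Z) ∪ γ '' (A ∩ Z)) := measure_mono hsplit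
    _ ≤ μH[1/α] (γ '' (A \ Z)) + μH[1/α] (γ '' (A ∩ Z)) := measure_union_le _ _
    _ ≤ 0 := by rw [part1, part2, add_zero]
end
end

section
/- Let γ : I → ℝ^d be an (H,α)-Hölder and (α,η)-tight curve. Fix ε > 0 and ω ∈ Ω, and let A be the set of all t ∈ I such that γ has ε-gaps of arbitrarily small scales at t. Then H^1(A ∩ γ^{−1}(E(ω))) = 0 and H^{1/α}(γ(A) ∩ E(ω)) = 0. -/
open MeasureTheory Set
open scoped ENNReal NNReal

noncomputable section

open FracPerc

/-- Around `H¹`-almost every point of a tight Hölder curve lying in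
`E(ω)` there are no `ε`-gaps of arbitrarily small scales. -/
theorem small_gaps
    (d N : ℕ) (hd : 2 ≤ d) (hN : 2 ≤ N) (ω : Omega d N)
    (α H η ε : ℝ) (hα0 : 0 < α) (hα1 : α ≤ 1) (hH : 0 ≤ H) (hη : 0 < η) (hε : 0 < ε)
    (a b : ℝ) (hab : a ≤ b) (γ : ℝ → Euc d)
    (hHol : ∀ t ∈ Icc a b, ∀ s ∈ Icc a b, dist (γ t) (γ s) ≤ H * |t - s| ^ α)
    (hTight : ∀ t ∈ Icc a b, ∃ R : ℝ, 0 < R ∧ TightAt d γ (Icc a b) α η R t) :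
    μH[1] ({t ∈ Icc a b | ∀ δ : ℝ, 0 < δ → ∃ r : ℝ, 0 < r ∧ r < δ ∧
        GapAtScale d N ω γ (Icc a b) ε t r} ∩ γ ⁻¹' percSet d N ω) = 0 ∧
      μH[1/α] (γ '' {t ∈ Icc a b | ∀ δ : ℝ, 0 < δ → ∃ r : ℝ, 0 < r ∧ r < δ ∧
        GapAtScale d N ω γ (Icc a b) ε t r} ∩ percSet d N ω) = 0 := by
  have hHpos : 0 < H := by
    rcases hTight a ⟨le_refl a, hab⟩ with ⟨R, hR, hTa⟩
    by_contra hH'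
    have hH0 : H = 0 := le_antisymm (not_lt.1 hH') hH
    have hdiam : Metric.diam (γ '' (Icc (a - R) (a + R) ∩ Icc a b)) ≤ 0 := by
      apply Metric.diam_le_of_forall_dist_le le_rfl
      rintro x ⟨t, ht, rfl⟩ y ⟨s, hs, rfl⟩
      have := hHol t ht.2 s hs.2
      rw [hH0, zero_mul] at this
      exact this
    have := hTa R hR le_rfl
    have h2R : 0 < η * (2 * R) ^ α :=
      mul_pos hη (Real.rpow_pos_of_pos (by linarith) α)
    linarith
  set A : Set ℝ := {t ∈ Icc a b | ∀ δ : ℝ, 0 < δ → ∃ r : ℝ, 0 < r ∧ r < δ ∧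
      GapAtScale d N ω γ (Icc a b) ε t r} with hA
  set B : Set ℝ := A ∩ γ ⁻¹' percSet d N ω with hB
  set c : ℝ := min ((ε * η / H) ^ α⁻¹) (1 / 2) with hc
  have hc0 : 0 < c := by
    apply lt_min _ (by norm_num)
    exact Real.rpow_pos_of_pos (div_pos (mul_pos hε hη) hHpos) _
  have hc1 : c < 1 := lt_of_le_of_lt (min_le_right _ _) (by norm_num)
  -- Key claim: around each point of B there are arbitrarily small scales with a
  -- definite gap in B.
  have key : ∀ x ∈ B, ∀ δ : ℝ, 0 < δ → ∃ r' : ℝ, 0 < r' ∧ r' < δ ∧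
      volume (B ∩ Metric.closedBall x r') ≤ ENNReal.ofReal ((1 - c) * (2 * r')) := by
    intro x hxB δ hδ
    have hxI : x ∈ Icc a b := hxB.1.1
    rcases hTight x hxI with ⟨R, hR, hTx⟩
    rcases hxB.1.2 (min δ R) (lt_min hδ hR) with ⟨r', hr'0, hr'δ, hgap⟩
    have hr'R : r' ≤ R := le_of_lt (lt_of_lt_of_le hr'δ (min_le_right _ _))
    rcases hgap with ⟨ta, tb, hta, htb, htab, hout, hdist⟩
    refine ⟨r', hr'0, lt_of_lt_of_le hr'δ (min_le_left _ _), ?_⟩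
    -- length of the gap interval
    have hdiam : η * (2 * r') ^ α ≤
        Metric.diam (γ '' (Icc (x - r') (x + r') ∩ Icc a b)) := hTx r' hr'0 hr'R
    have hd1 : ε * (η * (2 * r') ^ α) ≤ dist (γ ta) (γ tb) :=
      le_trans (by nlinarith [Metric.diam_nonneg (s := γ '' (Icc (x - r') (x + r') ∩ Icc a b))])
        hdist
    have hd2 : dist (γ ta) (γ tb) ≤ H * (tb - ta) ^ α := by
      have := hHol ta hta.2 tb htb.2
      rwa [abs_of_neg (by linarith), neg_sub] at this
    have hsα : (ε * η / H) * (2 * r') ^ α ≤ (tb - ta) ^ α := by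
      rw [div_mul_eq_mul_div, div_le_iff₀ hHpos]
      nlinarith
    have hstep : c * (2 * r') ≤ tb - ta := by
      have h1 : ((ε * η / H) * (2 * r') ^ α) ^ α⁻¹ ≤ ((tb - ta) ^ α) ^ α⁻¹ := by
        apply Real.rpow_le_rpow _ hsα (by positivity)
        positivity
      have h2r : (0 : ℝ) < 2 * r' := by linarith
      have hl : ((ε * η / H) * (2 * r') ^ α) ^ α⁻¹
          = (ε * η / H) ^ α⁻¹ * (2 * r') := by
        rw [Real.mul_rpow (by positivity) (by positivity),
          ← Real.rpow_mul h2r.le, mul_inv_cancel₀ hα0.ne', Real.rpow_one]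
      have hr2 : ((tb - ta) ^ α) ^ α⁻¹ = tb - ta := by
        rw [← Real.rpow_mul (by linarith), mul_inv_cancel₀ hα0.ne', Real.rpow_one]
      calc c * (2 * r') ≤ (ε * η / H) ^ α⁻¹ * (2 * r') := by
            apply mul_le_mul_of_nonneg_right (min_le_left _ _) h2r.le
        _ = ((ε * η / H) * (2 * r') ^ α) ^ α⁻¹ := hl.symm
        _ ≤ ((tb - ta) ^ α) ^ α⁻¹ := h1
        _ = tb - ta := hr2
    -- B misses the interval (ta, tb)
    have hsub : B ∩ Metric.closedBall x r' ⊆ Icc (x - r') (x + r') \ Ioo ta tb := by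
      rintro t ⟨htB, htball⟩
      rw [Real.closedBall_eq_Icc] at htball
      refine ⟨htball, fun htIoo => ?_⟩
      exact (hout t htIoo) htB.2
    calc volume (B ∩ Metric.closedBall x r')
        ≤ volume (Icc (x - r') (x + r') \ Ioo ta tb) := measure_mono hsub
      _ = volume (Icc (x - r') (x + r')) - volume (Ioo ta tb) := by
          rw [measure_diff (Ioo_subset_Icc_self.trans (Icc_subset_Icc hta.1.1 htb.1.2))
            measurableSet_Ioo.nullMeasurableSet (by simp)]
      _ = ENNReal.ofReal ((x + r') - (x - r')) - ENNReal.ofReal (tb - ta) := by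
          rw [Real.volume_Icc, Real.volume_Ioo]
      _ ≤ ENNReal.ofReal ((x + r') - (x - r') - (tb - ta)) := by
          rw [← ENNReal.ofReal_sub _ (by linarith)]
      _ ≤ ENNReal.ofReal ((1 - c) * (2 * r')) := by
          apply ENNReal.ofReal_le_ofReal; nlinarith
  -- first conclusion via Lebesgue density
  have hB0 : volume B = 0 := by
    by_contra hvol
    obtain ⟨x, hxB, hx⟩ : ∃ x ∈ B, Filter.Tendsto
        (fun r => volume (B ∩ Metric.closedBall x r) / volume (Metric.closedBall x r))
        (nhdsWithin 0 (Ioi 0)) (nhds 1) := by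
      by_contra h
      push_neg at h
      have hae := Besicovitch.ae_tendsto_measure_inter_div volume B
      rw [ae_iff] at hae
      have hBsub : B ⊆ {x | Filter.Tendsto
          (fun r => volume (B ∩ Metric.closedBall x r) / volume (Metric.closedBall x r))
          (nhdsWithin 0 (Ioi 0)) (nhds 1)}ᶜ := fun x hx => h x hx
      have := (MeasureTheory.Measure.restrict_apply_self volume B).symm.trans_le
        (le_trans (measure_mono hBsub) hae.le)
      exact hvol (le_antisymm this bot_le)
    -- density at x is eventually > 1 - c, but key claim contradicts this
    have hκ : ENNReal.ofReal (1 - c) < 1 := by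
      rw [← ENNReal.ofReal_one]
      exact ENNReal.ofReal_lt_ofReal_iff_of_nonneg (by linarith) |>.2 (by linarith)
    have hev := hx (Ioi_mem_nhds hκ)
    rw [Filter.mem_map, mem_nhdsWithin] at hev
    obtain ⟨U, hUopen, hU0, hUsub⟩ := hev
    obtain ⟨δ, hδ0, hδball⟩ := Metric.isOpen_iff.1 hUopen 0 hU0
    obtain ⟨r', hr'0, hr'δ, hr'vol⟩ := key x hxB δ hδ0
    have hmem : r' ∈ U ∩ Ioi 0 := by
      refine ⟨hδball ?_, hr'0⟩
      simp [Real.dist_eq, abs_of_pos hr'0, hr'δ]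
    have hgt := hUsub hmem
    have hle : volume (B ∩ Metric.closedBall x r') / volume (Metric.closedBall x r')
        ≤ ENNReal.ofReal (1 - c) := by
      apply ENNReal.div_le_of_le_mul
      rw [Real.volume_closedBall, ← ENNReal.ofReal_mul (by linarith)]
      exact hr'vol
    exact absurd hle (not_le.2 hgt)
  have hB1 : μH[1] B = 0 := by
    rw [MeasureTheory.hausdorffMeasure_real]; exact hB0
  refine ⟨hB1, ?_⟩
  -- second conclusion via Hölder image bound
  have hBsub : B ⊆ Icc a b := fun t ht => ht.1.1
  have hHold : HolderOnWith H.toNNReal α.toNNReal γ B := by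
    intro t ht s hs
    rw [edist_dist, edist_dist]
    calc ENNReal.ofReal (dist (γ t) (γ s))
        ≤ ENNReal.ofReal (H * |t - s| ^ α) :=
          ENNReal.ofReal_le_ofReal (hHol t (hBsub ht) s (hBsub hs))
      _ = ENNReal.ofReal H * ENNReal.ofReal (|t - s| ^ α) := by
          rw [ENNReal.ofReal_mul hH]
      _ = (H.toNNReal : ℝ≥0∞) * ENNReal.ofReal |t - s| ^ (α.toNNReal : ℝ) := by
          rw [Real.coe_toNNReal α hα0.le,
            ENNReal.ofReal_rpow_of_nonneg (abs_nonneg _) hα0.le]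
          rfl
      _ = (H.toNNReal : ℝ≥0∞) * ENNReal.ofReal (dist t s) ^ (α.toNNReal : ℝ) := by
          rw [Real.dist_eq]
  have himg : γ '' A ∩ percSet d N ω ⊆ γ '' B := by
    rintro y ⟨⟨t, htA, rfl⟩, hyE⟩
    exact ⟨t, ⟨htA, hyE⟩, rfl⟩
  have hαt : (0 : ℝ≥0) < α.toNNReal := by
    rwa [← Real.toNNReal_zero, Real.toNNReal_lt_toNNReal_iff hα0]
  have hbound := hHold.hausdorffMeasure_image_le hαt (d := 1 / α) (by positivity)
  have hone : (α.toNNReal : ℝ) * (1 / α) = 1 := by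
    rw [Real.coe_toNNReal α hα0.le]
    field_simp
  rw [hone, hB1, mul_zero] at hbound
  exact le_antisymm (le_trans (measure_mono himg) hbound) bot_le
end
end
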